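/- Let X be a minimal infinite one-sided shift space with bounded complexity growth, i.e., there exists K > 0 with p_X(n+1) − p_X(n) ≤ K for all n ≥ 1, where p_X(n) is the number of words of length n in the language of X. Then the number of left special elements of X is at most K; in particular Sp_l(X) is finite. -/

import Mathlib

open Function Set

variable {A : Type*}

/-- The one-sided shift map. -/
def shiftMap (x : ℕ → A) : ℕ → A := fun n => x (n + 1)

/-- Prepend a finite word to a one-sided sequence. -/
def prependWord (μ : List A) (x : ℕ → A) : ℕ → A :=
  fun n => if h : n < μ.length then μ.get ⟨n, h⟩ else x (n - μ.length)

/-- `PastSet X l x` is the set `P_l(x)` of words `μ` of length `l` with `μx ∈ X`. -/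
def PastSet (X : Set (ℕ → A)) (l : ℕ) (x : ℕ → A) : Set (List A) :=
  {μ | μ.length = l ∧ prependWord μ x ∈ X}

/-- A point is left special if it has at least two shift-preimages in `X`. -/
def IsLeftSpecial (X : Set (ℕ → A)) (x : ℕ → A) : Prop :=
  x ∈ X ∧ ∃ y z, y ∈ X ∧ z ∈ X ∧ y ≠ z ∧ shiftMap y = x ∧ shiftMap z = x

/-- The set of left special elements of `X`. -/
def SpL (X : Set (ℕ → A)) : Set (ℕ → A) := {x | IsLeftSpecial X x}

/-- A point is periodic if `σ^n x = x` for some `n ≥ 1`. -/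
def IsPer (x : ℕ → A) : Prop := ∃ n ≥ 1, shiftMap^[n] x = x

/-- The language of `X`: finite words occurring as factors of points of `X`. -/
def Lang (X : Set (ℕ → A)) : Set (List A) :=
  {μ | ∃ x ∈ X, ∃ n : ℕ, ∀ i : Fin μ.length, x (n + i) = μ.get i}

/-- The two-sided shift space associated with `X` (inverse limit identification). -/
def twoSided (X : Set (ℕ → A)) : Set (ℤ → A) :=
  {z | ∀ n : ℤ, (fun i : ℕ => z (n + i)) ∈ X}

/-- Left special elements of a two-sided shift space. -/
def SpLZ (Y : Set (ℤ → A)) : Set (ℤ → A) :=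
  {z | z ∈ Y ∧ ∃ z' ∈ Y, z' (-1) ≠ z (-1) ∧ ∀ i : ℕ, z' i = z i}

/-- Right tail equivalence. -/
def Rte (x y : ℕ → A) : Prop := ∃ M M' : ℕ, shiftMap^[M] x = shiftMap^[M'] y

def pref (x : ℕ → A) (n : ℕ) : List A := List.ofFn fun i : Fin n => x i

lemma pref_length (x : ℕ → A) (n : ℕ) : (pref x n).length = n := by simp [pref]

lemma pref_mem_lang {X : Set (ℕ → A)} {x : ℕ → A} (hx : x ∈ X) (n : ℕ) :
    pref x n ∈ Lang X := by
  refine ⟨x, hx, 0, ?_⟩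
  intro i
  rw [List.get_eq_getElem]
  simp [pref, List.get_ofFn]

lemma cons_pref_mem_lang {X : Set (ℕ → A)} {y : ℕ → A} (hy : y ∈ X) (n : ℕ) :
    (y 0 :: pref (shiftMap y) n) ∈ Lang X := by
  have h : y 0 :: pref (shiftMap y) n = pref y (n+1) := by
    simp [pref, shiftMap, List.ofFn_succ]
  rw [h]; exact pref_mem_lang hy _

lemma exists_cons_mem {X : Set (ℕ → A)} (hseq : shiftMap '' X = X) {w : List A}
    (hw : w ∈ Lang X) : ∃ a, a :: w ∈ Lang X := by
  obtain ⟨x, hx, m, hocc⟩ := hw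
  cases m with
  | zero =>
    rw [← hseq] at hx
    obtain ⟨y, hy, hyx⟩ := hx
    refine ⟨y 0, y, hy, 0, ?_⟩
    rintro ⟨i, hi⟩
    cases i with
    | zero => simp
    | succ j =>
      have hj : j < w.length := by simpa using hi
      have := hocc ⟨j, hj⟩
      simp only [List.get_cons_succ]
      calc y (0 + (j+1)) = shiftMap y (0 + j) := by simp [shiftMap]
        _ = x (0 + j) := by rw [hyx]
        _ = w.get ⟨j, hj⟩ := this
  | succ m =>
    refine ⟨x m, x, hx, m, ?_⟩
    rintro ⟨i, hi⟩
    cases i with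
    | zero => simp
    | succ j =>
      have hj : j < w.length := by simpa using hi
      have := hocc ⟨j, hj⟩
      simp only [List.get_cons_succ]
      calc x (m + (j+1)) = x (m + 1 + j) := by ring_nf
        _ = w.get ⟨j, hj⟩ := this

def LSw (X : Set (ℕ → A)) (n : ℕ) : Set (List A) :=
  {w | w ∈ Lang X ∧ w.length = n ∧ ∃ a b, a ≠ b ∧ a :: w ∈ Lang X ∧ b :: w ∈ Lang X}

lemma LSw_card_le [Finite A] [Nonempty A] {X : Set (ℕ → A)}
    (hseq : shiftMap '' X = X) (n : ℕ) :
    (LSw X n).ncard ≤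
      {μ ∈ Lang X | μ.length = n + 1}.ncard - {μ ∈ Lang X | μ.length = n}.ncard := by
  classical
  set Ln : Set (List A) := {μ ∈ Lang X | μ.length = n} with hLn
  set Ln1 : Set (List A) := {μ ∈ Lang X | μ.length = n + 1} with hLn1
  have hLnfin : Ln.Finite := (List.finite_length_eq A n).subset (fun w hw => hw.2)
  have hLn1fin : Ln1.Finite := (List.finite_length_eq A (n+1)).subset (fun w hw => hw.2)
  have hLSfin : (LSw X n).Finite :=
    (List.finite_length_eq A n).subset (fun w hw => hw.2.1)
  -- choice functions
  set f1 : List A → A := fun w =>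
    if h : ∃ a, a :: w ∈ Lang X then h.choose else Classical.arbitrary A with hf1def
  have hf1 : ∀ w ∈ Ln, (f1 w) :: w ∈ Lang X := by
    intro w hw
    have h : ∃ a, a :: w ∈ Lang X := exists_cons_mem hseq hw.1
    simp only [hf1def, dif_pos h]
    exact h.choose_spec
  set f2 : List A → A := fun w =>
    if h : ∃ b, b ≠ f1 w ∧ b :: w ∈ Lang X then h.choose else Classical.arbitrary A
    with hf2def
  have hf2 : ∀ w ∈ LSw X n, f2 w ≠ f1 w ∧ (f2 w) :: w ∈ Lang X := by
    intro w hw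
    obtain ⟨-, -, a, b, hab, ha, hb⟩ := hw
    have h : ∃ c, c ≠ f1 w ∧ c :: w ∈ Lang X := by
      by_cases hA : a = f1 w
      · exact ⟨b, by rw [← hA]; exact fun e => hab e.symm, hb⟩
      · exact ⟨a, hA, ha⟩
    simp only [hf2def, dif_pos h]
    exact h.choose_spec
  set S1 : Set (List A) := (fun w => f1 w :: w) '' Ln with hS1
  set S2 : Set (List A) := (fun w => f2 w :: w) '' (LSw X n) with hS2
  have hLS_sub : LSw X n ⊆ Ln := fun w hw => ⟨hw.1, hw.2.1⟩
  have hsub : S1 ∪ S2 ⊆ Ln1 := by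
    rintro v (⟨w, hw, rfl⟩ | ⟨w, hw, rfl⟩)
    · exact ⟨hf1 w hw, by simp [hw.2]⟩
    · exact ⟨(hf2 w hw).2, by simp [hw.2.1]⟩
  have hdisj : Disjoint S1 S2 := by
    rw [Set.disjoint_left]
    rintro v ⟨w, hw, rfl⟩ ⟨w', hw', he⟩
    obtain ⟨he1, he2⟩ := List.cons_eq_cons.1 he
    subst he2
    exact (hf2 _ hw').1 he1
  have hinj1 : Set.InjOn (fun w => f1 w :: w) Ln := by
    intro a _ b _ h; exact (List.cons_eq_cons.1 h).2
  have hinj2 : Set.InjOn (fun w => f2 w :: w) (LSw X n) := by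
    intro a _ b _ h; exact (List.cons_eq_cons.1 h).2
  have hcard : Ln.ncard + (LSw X n).ncard ≤ Ln1.ncard := by
    have e1 : S1.ncard = Ln.ncard := Set.ncard_image_of_injOn hinj1
    have e2 : S2.ncard = (LSw X n).ncard := Set.ncard_image_of_injOn hinj2
    have e3 : (S1 ∪ S2).ncard = S1.ncard + S2.ncard :=
      Set.ncard_union_eq hdisj (hLnfin.image _) (hLSfin.image _)
    calc Ln.ncard + (LSw X n).ncard = (S1 ∪ S2).ncard := by rw [e3, e1, e2]
      _ ≤ Ln1.ncard := Set.ncard_le_ncard hsub hLn1fin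
  omega

lemma pref_eq_iff {x y : ℕ → A} {n : ℕ} (h : pref x n = pref y n) :
    ∀ i < n, x i = y i := by
  intro i hi
  have h2 := List.ofFn_inj.1 h
  exact congrFun h2 ⟨i, hi⟩

lemma key_bound [Finite A] {X : Set (ℕ → A)} (hseq : shiftMap '' X = X) {K : ℕ}
    (hcplx : ∀ n : ℕ, 1 ≤ n →
      {μ ∈ Lang X | μ.length = n + 1}.ncard - {μ ∈ Lang X | μ.length = n}.ncard ≤ K)
    {S : Set (ℕ → A)} (hS : S ⊆ SpL X) (hfin : S.Finite) : S.ncard ≤ K := by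
  classical
  rcases S.eq_empty_or_nonempty with rfl | ⟨x0, hx0⟩
  · simp
  have : Nonempty A := ⟨x0 0⟩
  set D : (ℕ → A) → (ℕ → A) → ℕ := fun x y =>
    if h : ∃ i, x i ≠ y i then h.choose else 0 with hD
  have hDspec : ∀ x y : ℕ → A, x ≠ y → x (D x y) ≠ y (D x y) := by
    intro x y hxy
    have h : ∃ i, x i ≠ y i := Function.ne_iff.1 hxy
    simp only [hD, dif_pos h]
    exact h.choose_spec
  set n : ℕ := 1 + (hfin.toFinset ×ˢ hfin.toFinset).sup (fun p => D p.1 p.2) with hn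
  have hDlt : ∀ x ∈ S, ∀ y ∈ S, D x y < n := by
    intro x hx y hy
    have hmem : (x, y) ∈ hfin.toFinset ×ˢ hfin.toFinset :=
      Finset.mem_product.2 ⟨hfin.mem_toFinset.2 hx, hfin.mem_toFinset.2 hy⟩
    have h2 : D x y ≤ (hfin.toFinset ×ˢ hfin.toFinset).sup
        (fun p : (ℕ → A) × (ℕ → A) => D p.1 p.2) :=
      Finset.le_sup (f := fun p : (ℕ → A) × (ℕ → A) => D p.1 p.2) hmem
    omega
  have hinj : Set.InjOn (fun x => pref x n) S := by
    intro x hx y hy h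
    by_contra hxy
    exact hDspec x y hxy (pref_eq_iff h _ (hDlt x hx y hy))
  have hmaps : ∀ x ∈ S, pref x n ∈ LSw X n := by
    intro x hx
    obtain ⟨hxX, y, z, hy, hz, hyz, hyx, hzx⟩ := hS hx
    refine ⟨pref_mem_lang hxX n, pref_length x n, y 0, z 0, ?_, ?_, ?_⟩
    · intro h0
      apply hyz
      funext k
      cases k with
      | zero => exact h0
      | succ m =>
        have h1 : shiftMap y m = shiftMap z m := by rw [hyx, hzx]
        exact h1
    · have h2 : pref x n = pref (shiftMap y) n := by rw [hyx]
      rw [h2]; exact cons_pref_mem_lang hy n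
    · have h2 : pref x n = pref (shiftMap z) n := by rw [hzx]
      rw [h2]; exact cons_pref_mem_lang hz n
  have hLSfin : (LSw X n).Finite :=
    (List.finite_length_eq A n).subset (fun w hw => hw.2.1)
  calc S.ncard = ((fun x => pref x n) '' S).ncard :=
        (Set.ncard_image_of_injOn hinj).symm
    _ ≤ (LSw X n).ncard := Set.ncard_le_ncard (Set.image_subset_iff.2 hmaps) hLSfin
    _ ≤ _ := LSw_card_le hseq n
    _ ≤ K := hcplx n (by omega)

/-- a minimal infinite shift with bounded complexity growth (bound `K`)
has at most `K` left special elements. -/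
theorem stmt7 [Finite A] [TopologicalSpace A] [DiscreteTopology A]
    (X : Set (ℕ → A)) (hne : X.Nonempty) (hcl : IsClosed X)
    (hseq : shiftMap '' X = X) (hinf : X.Infinite)
    (hmin : ∀ x ∈ X, ∀ y ∈ X, y ∈ closure {z | ∃ n : ℕ, shiftMap^[n] x = z})
    (K : ℕ) (hK : 0 < K)
    (hcplx : ∀ n : ℕ, 1 ≤ n →
      {μ ∈ Lang X | μ.length = n + 1}.ncard - {μ ∈ Lang X | μ.length = n}.ncard ≤ K) :
    (SpL X).ncard ≤ K ∧ (SpL X).Finite := by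
  have hfin : (SpL X).Finite := by
    by_contra h
    obtain ⟨T, hTsub, hTfin, hTcard⟩ :=
      (Set.Infinite.exists_subset_ncard_eq h (K + 1))
    have := key_bound hseq hcplx hTsub hTfin
    omega
  exact ⟨key_bound hseq hcplx subset_rfl hfin, hfin⟩
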